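/- arXiv:2105.05052 — 4 statements merged into one kernel-verified Lean document; each statement's English description precedes it below -/
import Mathlib

section
/- Let L : ℝ^d → ℝ be m-strongly convex, let u, w ∈ ℝ^d, and let M = diag(M₁,...,M_d) be a random diagonal matrix with independent entries satisfying E[Mᵢ] = μ > 0 and Var(Mᵢ) = σ². Define Φ(w; u, M) = μ⁻¹(Mw + (I − M)u − (1 − μ)u). Then E[L(Φ(w; u, M))] ≥ L(w) + (mσ²)/(2μ²) · ‖w − u‖₂². -/
open MeasureTheory Finset

/-- paper Theorem 1: for an `m`-strongly convex loss `L` (witnessed by a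
gradient map `g` via the first-order strong convexity inequality), and a random mask with
`E[Mᵢ] = μ > 0` and `Var(Mᵢ) = σ²`, the mixout mixture
`Φ(w; u, M)ᵢ = μ⁻¹(Mᵢ wᵢ + (1 − Mᵢ) uᵢ − (1 − μ) uᵢ)` satisfies
`E[L(Φ(w; u, M))] ≥ L(w) + (mσ²)/(2μ²)‖w − u‖₂²`. -/
theorem mixout_strongly_convex_lower_bound
    {Ω : Type*} [MeasureSpace Ω] [IsProbabilityMeasure (volume : Measure Ω)]
    {d : ℕ} (L : (Fin d → ℝ) → ℝ) (g : (Fin d → ℝ) → (Fin d → ℝ)) (m : ℝ) (hm : 0 < m)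
    (hsc : ∀ x y : Fin d → ℝ,
      L y ≥ L x + (∑ i, g x i * (y i - x i)) + m / 2 * ∑ i, (y i - x i) ^ 2)
    (M : Ω → Fin d → ℝ) (w u : Fin d → ℝ) (μ σ : ℝ) (hμ : 0 < μ)
    (hMmeas : ∀ i, Measurable fun ω => M ω i)
    (hint : ∀ i, Integrable (fun ω => M ω i))
    (hint2 : ∀ i, Integrable (fun ω => (M ω i) ^ 2))
    (hmean : ∀ i, ∫ ω, M ω i = μ)
    (hvar : ∀ i, ∫ ω, (M ω i - μ) ^ 2 = σ ^ 2)
    (Φ : Ω → Fin d → ℝ)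
    (hΦ : ∀ ω i, Φ ω i = μ⁻¹ * (M ω i * w i + (1 - M ω i) * u i - (1 - μ) * u i))
    (hLint : Integrable (fun ω => L (Φ ω))) :
    (∫ ω, L (Φ ω)) ≥ L w + m * σ ^ 2 / (2 * μ ^ 2) * ∑ i, (w i - u i) ^ 2 := by
  have hμ0 : μ ≠ 0 := ne_of_gt hμ
  have hΦw : ∀ ω i, Φ ω i - w i = μ⁻¹ * (M ω i - μ) * (w i - u i) := by
    intro ω i
    rw [hΦ]
    field_simp
    ring
  -- integrability of pieces
  have hintsub : ∀ i, Integrable (fun ω => M ω i - μ) :=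
    fun i => (hint i).sub (integrable_const μ)
  have hintsq : ∀ i, Integrable (fun ω => (M ω i - μ) ^ 2) := by
    intro i
    have h1 : Integrable (fun ω => M ω i ^ 2 - (2 * μ) * M ω i + μ ^ 2) :=
      ((hint2 i).sub ((hint i).const_mul (2 * μ))).add (integrable_const (μ ^ 2))
    refine h1.congr (Filter.Eventually.of_forall fun ω => ?_)
    ring
  have hintA : ∀ i, Integrable (fun ω => g w i * (μ⁻¹ * (M ω i - μ) * (w i - u i))) := by
    intro i
    exact (((hintsub i).const_mul μ⁻¹).mul_const (w i - u i)).const_mul (g w i)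
  have hintB : ∀ i, Integrable (fun ω => (μ⁻¹ * (M ω i - μ) * (w i - u i)) ^ 2) := by
    intro i
    have h1 : Integrable (fun ω => (μ⁻¹ * (w i - u i)) ^ 2 * (M ω i - μ) ^ 2) :=
      (hintsq i).const_mul _
    refine h1.congr (Filter.Eventually.of_forall fun ω => ?_)
    ring
  -- the lower-bound function
  set h : Ω → ℝ := fun ω =>
    L w + (∑ i, g w i * (μ⁻¹ * (M ω i - μ) * (w i - u i)))
      + m / 2 * ∑ i, (μ⁻¹ * (M ω i - μ) * (w i - u i)) ^ 2 with hh
  have hA : Integrable (fun ω => ∑ i, g w i * (μ⁻¹ * (M ω i - μ) * (w i - u i))) :=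
    integrable_finset_sum _ fun i _ => hintA i
  have hB : Integrable
      (fun ω => m / 2 * ∑ i, (μ⁻¹ * (M ω i - μ) * (w i - u i)) ^ 2) :=
    (integrable_finset_sum _ fun i _ => hintB i).const_mul (m / 2)
  have hhint : Integrable h := ((integrable_const (L w)).add hA).add hB
  have hle : ∀ ω, h ω ≤ L (Φ ω) := by
    intro ω
    have := hsc w (Φ ω)
    simp only [hh]
    calc L w + (∑ i, g w i * (μ⁻¹ * (M ω i - μ) * (w i - u i)))
          + m / 2 * ∑ i, (μ⁻¹ * (M ω i - μ) * (w i - u i)) ^ 2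
        = L w + (∑ i, g w i * (Φ ω i - w i)) + m / 2 * ∑ i, (Φ ω i - w i) ^ 2 := by
          simp only [hΦw]
      _ ≤ L (Φ ω) := this
  have hmono : ∫ ω, h ω ≤ ∫ ω, L (Φ ω) :=
    integral_mono hhint hLint hle
  -- compute ∫ h
  have hmean0 : ∀ i, ∫ ω, (M ω i - μ) = 0 := by
    intro i
    rw [integral_sub (hint i) (integrable_const μ), hmean i]
    simp
  have hintAeq : ∀ i, ∫ ω, g w i * (μ⁻¹ * (M ω i - μ) * (w i - u i)) = 0 := by
    intro i
    have : (fun ω => g w i * (μ⁻¹ * (M ω i - μ) * (w i - u i)))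
        = fun ω => (g w i * μ⁻¹ * (w i - u i)) * (M ω i - μ) := by
      funext ω; ring
    rw [this, integral_const_mul, hmean0 i, mul_zero]
  have hintBeq : ∀ i, ∫ ω, (μ⁻¹ * (M ω i - μ) * (w i - u i)) ^ 2
      = (μ⁻¹ * (w i - u i)) ^ 2 * σ ^ 2 := by
    intro i
    have : (fun ω => (μ⁻¹ * (M ω i - μ) * (w i - u i)) ^ 2)
        = fun ω => (μ⁻¹ * (w i - u i)) ^ 2 * (M ω i - μ) ^ 2 := by
      funext ω; ring
    rw [this, integral_const_mul, hvar i]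
  have hval : ∫ ω, h ω = L w + m * σ ^ 2 / (2 * μ ^ 2) * ∑ i, (w i - u i) ^ 2 := by
    have e1 : ∫ ω, h ω
        = (∫ ω, (L w + ∑ i, g w i * (μ⁻¹ * (M ω i - μ) * (w i - u i))))
          + ∫ ω, m / 2 * ∑ i, (μ⁻¹ * (M ω i - μ) * (w i - u i)) ^ 2 :=
      integral_add ((integrable_const (L w)).add hA) hB
    have e2 : (∫ ω, (L w + ∑ i, g w i * (μ⁻¹ * (M ω i - μ) * (w i - u i))))
        = (∫ _ω : Ω, L w) + ∫ ω, ∑ i, g w i * (μ⁻¹ * (M ω i - μ) * (w i - u i)) :=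
      integral_add (integrable_const (L w)) hA
    rw [e1, e2, integral_const, integral_const_mul,
        integral_finset_sum _ (fun i _ => hintA i),
        integral_finset_sum _ (fun i _ => hintB i)]
    simp only [hintAeq, hintBeq, Finset.sum_const_zero, add_zero, measure_univ, probReal_univ,
      ENNReal.toReal_one, smul_eq_mul, one_mul]
    congr 1
    rw [Finset.mul_sum, Finset.mul_sum]
    apply Finset.sum_congr rfl
    intro i _
    field_simp
  rw [ge_iff_le, ← hval]
  exact hmono
end

section
/- Let M = diag(M₁,...,M_d) be random with independent entries, E[Mᵢ] = μ > 0, Var(Mᵢ) = σ², and let Φ(w; u, M) = μ⁻¹(Mw + (I − M)u − (1 − μ)u). For the quadratic loss L(θ) = (1/2)‖Aθ − b‖² with A having columns aᵢ of norm at most √c, one has E[L(Φ(w; u, M))] = L(w) + (σ²)/(2μ²) · Σᵢ ‖aᵢ‖² (wᵢ − uᵢ)², and in particular E[L(Φ(w; u, M))] ≤ L(w) + (cσ²)/(2μ²)‖w − u‖². -/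
open MeasureTheory ProbabilityTheory Finset

/-- for the quadratic loss `L(θ) = (1/2)‖Aθ − b‖²` whose columns `aᵢ` satisfy
`‖aᵢ‖² ≤ c`, and an independent random mask with `E[Mᵢ] = μ > 0`, `Var(Mᵢ) = σ²`, the mixout
mixture satisfies
`E[L(Φ(w;u,M))] = L(w) + σ²/(2μ²) Σᵢ ‖aᵢ‖²(wᵢ − uᵢ)² ≤ L(w) + cσ²/(2μ²)‖w − u‖²`. -/
theorem mixout_quadratic_loss
    {Ω : Type*} [MeasureSpace Ω] [IsProbabilityMeasure (volume : Measure Ω)]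
    {n d : ℕ} (A : Matrix (Fin n) (Fin d) ℝ) (b : Fin n → ℝ) (c : ℝ)
    (hc : ∀ i, (∑ j, (A j i) ^ 2) ≤ c)
    (L : (Fin d → ℝ) → ℝ)
    (hL : ∀ θ, L θ = (1 / 2) * ∑ j, ((∑ i, A j i * θ i) - b j) ^ 2)
    (M : Ω → Fin d → ℝ) (w u : Fin d → ℝ) (μ σ : ℝ) (hμ : 0 < μ)
    (hMmeas : ∀ i, Measurable fun ω => M ω i)
    (hindep : iIndepFun (fun i ω => M ω i) volume)
    (hint : ∀ i, Integrable (fun ω => M ω i))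
    (hint2 : ∀ i, Integrable (fun ω => (M ω i) ^ 2))
    (hmean : ∀ i, ∫ ω, M ω i = μ)
    (hvar : ∀ i, ∫ ω, (M ω i - μ) ^ 2 = σ ^ 2)
    (Φ : Ω → Fin d → ℝ)
    (hΦ : ∀ ω i, Φ ω i = μ⁻¹ * (M ω i * w i + (1 - M ω i) * u i - (1 - μ) * u i)) :
    (∫ ω, L (Φ ω)) =
        L w + σ ^ 2 / (2 * μ ^ 2) * ∑ i, (∑ j, (A j i) ^ 2) * (w i - u i) ^ 2 ∧
      (∫ ω, L (Φ ω)) ≤ L w + c * σ ^ 2 / (2 * μ ^ 2) * ∑ i, (w i - u i) ^ 2 := by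
  have hμ0 : (μ:ℝ) ≠ 0 := ne_of_gt hμ
  set Y : Fin d → Ω → ℝ := fun i ω => (μ⁻¹ * (w i - u i)) * (M ω i - μ) with hY
  have hYint : ∀ i, Integrable (Y i) := fun i => ((hint i).sub (integrable_const μ)).const_mul _
  have hMμint : ∀ i, Integrable (fun ω => (M ω i - μ)^2) := by
    intro i
    have h : (fun ω => (M ω i - μ)^2) = fun ω => (M ω i)^2 - (2*μ) * M ω i + μ^2 := by
      funext ω; ring
    rw [h]
    exact ((hint2 i).sub ((hint i).const_mul _)).add (integrable_const _)
  have hYsq : ∀ i, (fun ω => Y i ω * Y i ω) = fun ω => (μ⁻¹ * (w i - u i))^2 * (M ω i - μ)^2 := by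
    intro i; funext ω; simp only [hY]; ring
  have hYint2 : ∀ i, Integrable (fun ω => Y i ω * Y i ω) := by
    intro i; rw [hYsq i]; exact (hMμint i).const_mul _
  have hEY : ∀ i, ∫ ω, Y i ω = 0 := by
    intro i
    simp only [hY]
    rw [integral_const_mul, integral_sub (hint i) (integrable_const _), hmean i, integral_const]
    simp
  have hEYsq : ∀ i, ∫ ω, Y i ω * Y i ω = σ^2 / μ^2 * (w i - u i)^2 := by
    intro i
    rw [hYsq i, integral_const_mul, hvar i]
    field_simp
  have hYindep : ∀ i k, i ≠ k → IndepFun (Y i) (Y k) volume := by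
    intro i k hik
    exact (hindep.indepFun hik).comp
      ((measurable_id.sub measurable_const).const_mul _)
      ((measurable_id.sub measurable_const).const_mul _)
  have hYmul : ∀ i k, Integrable (fun ω => Y i ω * Y k ω) := by
    intro i k
    rcases eq_or_ne i k with rfl | hik
    · exact hYint2 i
    · exact (hYindep i k hik).integrable_mul (hYint i) (hYint k)
  have hEYmul : ∀ i k, ∫ ω, Y i ω * Y k ω = if i = k then σ^2/μ^2*(w i - u i)^2 else 0 := by
    intro i k
    rcases eq_or_ne i k with rfl | hik
    · rw [if_pos rfl]; exact hEYsq i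
    · rw [if_neg hik]
      have h : ∫ ω, Y i ω * Y k ω = (∫ ω, Y i ω) * ∫ ω, Y k ω :=
        (hYindep i k hik).integral_fun_mul_eq_mul_integral (hYint i).aestronglyMeasurable (hYint k).aestronglyMeasurable
      rw [h, hEY i, zero_mul]
  have hΦw : ∀ ω i, Φ ω i = w i + Y i ω := by
    intro ω i
    rw [hΦ]
    simp only [hY]
    field_simp
    ring
  have key : ∀ ω, L (Φ ω) = L w + ((∑ j, ((∑ i, A j i * w i) - b j) * ∑ i, A j i * Y i ω)
      + (1/2) * ∑ j, ∑ i, ∑ k, (A j i * A j k) * (Y i ω * Y k ω)) := by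
    intro ω
    rw [hL, hL]
    have h1 : ∀ j, (∑ i, A j i * Φ ω i) = (∑ i, A j i * w i) + ∑ i, A j i * Y i ω := by
      intro j
      rw [← Finset.sum_add_distrib]
      exact Finset.sum_congr rfl fun i _ => by rw [hΦw]; ring
    have h2 : ∀ j, (((∑ i, A j i * w i) + ∑ i, A j i * Y i ω) - b j)^2
        = ((∑ i, A j i * w i) - b j)^2 + (2 * (((∑ i, A j i * w i) - b j) * ∑ i, A j i * Y i ω)
          + ∑ i, ∑ k, (A j i * A j k) * (Y i ω * Y k ω)) := by
      intro j
      have h3 : (∑ i, A j i * Y i ω) * (∑ k, A j k * Y k ω)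
          = ∑ i, ∑ k, (A j i * A j k) * (Y i ω * Y k ω) := by
        rw [Finset.sum_mul_sum]
        exact Finset.sum_congr rfl fun i _ => Finset.sum_congr rfl fun k _ => by ring
      rw [← h3]; ring
    simp only [h1, h2, Finset.sum_add_distrib, ← Finset.mul_sum]
    ring
  have hf1int : ∀ j, Integrable (fun ω => ((∑ i, A j i * w i) - b j) * ∑ i, A j i * Y i ω) := by
    intro j
    exact (integrable_finset_sum _ fun i _ => (hYint i).const_mul _).const_mul _
  have hf2int : ∀ j, Integrable (fun ω => ∑ i, ∑ k, (A j i * A j k) * (Y i ω * Y k ω)) := by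
    intro j
    exact integrable_finset_sum _ fun i _ => integrable_finset_sum _ fun k _ => (hYmul i k).const_mul _
  have hEf1 : ∫ ω, (∑ j, ((∑ i, A j i * w i) - b j) * ∑ i, A j i * Y i ω) = 0 := by
    rw [integral_finset_sum _ fun j _ => hf1int j]
    apply Finset.sum_eq_zero
    intro j _
    rw [integral_const_mul, integral_finset_sum _ fun i _ => (hYint i).const_mul _]
    have : ∀ i ∈ Finset.univ, ∫ ω, A j i * Y i ω = 0 := by
      intro i _; rw [integral_const_mul, hEY i, mul_zero]
    rw [Finset.sum_congr rfl this, Finset.sum_const_zero, mul_zero]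
  have hEf2 : ∫ ω, (∑ j, ∑ i, ∑ k, (A j i * A j k) * (Y i ω * Y k ω))
      = ∑ j, ∑ i, (A j i)^2 * (σ^2/μ^2 * (w i - u i)^2) := by
    rw [integral_finset_sum _ fun j _ => hf2int j]
    refine Finset.sum_congr rfl fun j _ => ?_
    rw [integral_finset_sum _ fun i _ => integrable_finset_sum _ fun k _ => (hYmul i k).const_mul _]
    refine Finset.sum_congr rfl fun i _ => ?_
    rw [integral_finset_sum _ fun k _ => (hYmul i k).const_mul _]
    rw [Finset.sum_eq_single i]
    · rw [integral_const_mul, hEYmul i i, if_pos rfl]; ring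
    · intro k _ hk
      rw [integral_const_mul, hEYmul i k, if_neg (Ne.symm hk), mul_zero]
    · intro h; exact absurd (Finset.mem_univ i) h
  have hmain : (∫ ω, L (Φ ω)) = L w + σ^2/(2*μ^2) * ∑ i, (∑ j, (A j i)^2) * (w i - u i)^2 := by
    have h0 : (∫ ω, L (Φ ω)) = ∫ ω, (L w + ((∑ j, ((∑ i, A j i * w i) - b j) * ∑ i, A j i * Y i ω)
        + (1/2) * ∑ j, ∑ i, ∑ k, (A j i * A j k) * (Y i ω * Y k ω))) := by
      exact integral_congr_ae (Filter.Eventually.of_forall key)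
    rw [h0]
    have hA : Integrable (fun ω => ∑ j, ((∑ i, A j i * w i) - b j) * ∑ i, A j i * Y i ω) :=
      integrable_finset_sum _ fun j _ => hf1int j
    have hB : Integrable (fun ω => (1/2 : ℝ) * ∑ j, ∑ i, ∑ k, (A j i * A j k) * (Y i ω * Y k ω)) :=
      (integrable_finset_sum _ fun j _ => hf2int j).const_mul _
    have hAB : Integrable (fun ω => (∑ j, ((∑ i, A j i * w i) - b j) * ∑ i, A j i * Y i ω)
        + (1/2 : ℝ) * ∑ j, ∑ i, ∑ k, (A j i * A j k) * (Y i ω * Y k ω)) := hA.add hB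
    rw [integral_add (integrable_const _) hAB, integral_add hA hB]
    rw [integral_const_mul, hEf1, hEf2, integral_const]
    simp only [measure_univ, probReal_univ, ENNReal.toReal_one, smul_eq_mul, one_mul, zero_add]
    congr 1
    rw [Finset.sum_comm, Finset.mul_sum, Finset.mul_sum]
    refine Finset.sum_congr rfl fun i _ => ?_
    rw [Finset.sum_mul, Finset.mul_sum, Finset.mul_sum]
    refine Finset.sum_congr rfl fun j _ => ?_
    field_simp
  refine ⟨hmain, ?_⟩
  rw [hmain]
  have hσ : (0:ℝ) ≤ σ^2/(2*μ^2) := div_nonneg (sq_nonneg σ) (by positivity)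
  have hsum : ∑ i, (∑ j, (A j i)^2) * (w i - u i)^2 ≤ c * ∑ i, (w i - u i)^2 := by
    rw [Finset.mul_sum]
    exact Finset.sum_le_sum fun i _ => mul_le_mul_of_nonneg_right (hc i) (sq_nonneg _)
  have h := mul_le_mul_of_nonneg_left hsum hσ
  have heq : c * σ^2/(2*μ^2) * ∑ i, (w i - u i)^2
      = σ^2/(2*μ^2) * (c * ∑ i, (w i - u i)^2) := by ring
  rw [heq]
  exact add_le_add_right h _
end

section
/- Let L(θ) = (1/2)‖Aθ − b‖² be quadratic with A^T A = cI for some c > 0 (so L is c-strongly convex), and let M, μ, σ², Φ be as in the mixout setting. Then E[L(Φ(w; u, M))] = L(w) + (cσ²)/(2μ²)‖w − u‖₂², i.e., the strong-convexity lower bound holds with equality for such quadratic losses. -/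
open MeasureTheory ProbabilityTheory Finset Matrix

/-- for a quadratic loss `L(θ) = (1/2)‖Aθ − b‖²` with `AᵀA = cI` (`c > 0`),
the mixout strong-convexity bound holds with equality:
`E[L(Φ(w; u, M))] = L(w) + cσ²/(2μ²)‖w − u‖₂²`. -/
theorem mixout_quadratic_equality
    {Ω : Type*} [MeasureSpace Ω] [IsProbabilityMeasure (volume : Measure Ω)]
    {n d : ℕ} (A : Matrix (Fin n) (Fin d) ℝ) (b : Fin n → ℝ) (c : ℝ) (hc : 0 < c)
    (hA : Aᵀ * A = c • (1 : Matrix (Fin d) (Fin d) ℝ))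
    (L : (Fin d → ℝ) → ℝ)
    (hL : ∀ θ, L θ = (1 / 2) * ∑ j, ((∑ i, A j i * θ i) - b j) ^ 2)
    (M : Ω → Fin d → ℝ) (w u : Fin d → ℝ) (μ σ : ℝ) (hμ : 0 < μ)
    (hMmeas : ∀ i, Measurable fun ω => M ω i)
    (hindep : iIndepFun (fun i ω => M ω i) volume)
    (hint : ∀ i, Integrable (fun ω => M ω i))
    (hint2 : ∀ i, Integrable (fun ω => (M ω i) ^ 2))
    (hmean : ∀ i, ∫ ω, M ω i = μ)
    (hvar : ∀ i, ∫ ω, (M ω i - μ) ^ 2 = σ ^ 2)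
    (Φ : Ω → Fin d → ℝ)
    (hΦ : ∀ ω i, Φ ω i = μ⁻¹ * (M ω i * w i + (1 - M ω i) * u i - (1 - μ) * u i)) :
    (∫ ω, L (Φ ω)) = L w + c * σ ^ 2 / (2 * μ ^ 2) * ∑ i, (w i - u i) ^ 2 := by
  have hμ0 : μ ≠ 0 := ne_of_gt hμ
  set a : Fin d → ℝ := fun i => μ⁻¹ * (w i - u i) with ha
  have hΦ' : ∀ ω i, Φ ω i = u i + a i * M ω i := by
    intro ω i
    rw [hΦ]
    field_simp [ha]
    simp only [ha]; linear_combination (-(M ω i * (w i - u i))) * mul_inv_cancel₀ hμ0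
  -- entries of AᵀA
  have hent : ∀ i k : Fin d, (∑ j, A j i * A j k) = if i = k then c else 0 := by
    intro i k
    have h := congrFun (congrFun hA i) k
    simp [Matrix.mul_apply, Matrix.transpose_apply, Matrix.one_apply, Matrix.smul_apply,
      mul_ite, mul_one, mul_zero] at h
    exact h
  -- quadratic expansion of L
  have key : ∀ θ : Fin d → ℝ, (∑ j, (∑ i, A j i * θ i) ^ 2) = c * ∑ i, θ i ^ 2 := by
    intro θ
    have h1 : ∀ j, (∑ i, A j i * θ i) ^ 2
        = ∑ i, ∑ k, (A j i * θ i) * (A j k * θ k) := by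
      intro j; rw [sq, Finset.sum_mul_sum]
    simp_rw [h1]
    rw [Finset.sum_comm]
    have h2 : ∀ i, (∑ j, ∑ k, (A j i * θ i) * (A j k * θ k)) = c * θ i ^ 2 := by
      intro i
      rw [Finset.sum_comm]
      have h3 : ∀ k, (∑ j, (A j i * θ i) * (A j k * θ k))
          = if i = k then θ i * θ k * c else 0 := by
        intro k
        have : (∑ j, (A j i * θ i) * (A j k * θ k)) = θ i * θ k * ∑ j, A j i * A j k := by
          rw [Finset.mul_sum]
          exact Finset.sum_congr rfl fun j _ => by ring
        rw [this, hent i k]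
        split_ifs <;> simp
      simp_rw [h3]
      rw [Finset.sum_ite_eq, if_pos (Finset.mem_univ i)]
      ring
    simp_rw [h2]
    rw [← Finset.mul_sum]
  have hquad : ∀ θ : Fin d → ℝ,
      L θ = c / 2 * ∑ i, θ i ^ 2 - ∑ i, (∑ j, b j * A j i) * θ i + 1 / 2 * ∑ j, b j ^ 2 := by
    intro θ
    rw [hL]
    have hsq : ∀ j, ((∑ i, A j i * θ i) - b j) ^ 2
        = (∑ i, A j i * θ i) ^ 2 - 2 * ((∑ i, A j i * θ i) * b j) + b j ^ 2 := by
      intro j; ring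
    simp_rw [hsq]
    rw [Finset.sum_add_distrib, Finset.sum_sub_distrib, key, ← Finset.mul_sum]
    have hcross : (∑ j, (∑ i, A j i * θ i) * b j) = ∑ i, (∑ j, b j * A j i) * θ i := by
      simp_rw [Finset.sum_mul]
      rw [Finset.sum_comm]
      exact Finset.sum_congr rfl fun i _ => Finset.sum_congr rfl fun j _ => by ring
    rw [hcross]
    ring
  -- second moment of M
  have hM2 : ∀ i, (∫ ω, (M ω i) ^ 2) = σ ^ 2 + μ ^ 2 := by
    intro i
    have hg : Integrable (fun ω => 2 * μ * M ω i - μ ^ 2) :=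
      ((hint i).const_mul _).sub (integrable_const _)
    have h1 : (fun ω => (M ω i - μ) ^ 2)
        = fun ω => (M ω i) ^ 2 - (2 * μ * M ω i - μ ^ 2) := by
      funext ω; ring
    have h2 := hvar i
    rw [h1, integral_sub (hint2 i) hg, integral_sub ((hint i).const_mul _) (integrable_const _),
      integral_const_mul, hmean i, integral_const] at h2
    simp at h2
    linarith
  -- moments of Φ coordinates
  have hΦint : ∀ i, Integrable (fun ω => Φ ω i) := by
    intro i
    have h0 : Integrable (fun ω => u i + a i * M ω i) :=
      (integrable_const _).add ((hint i).const_mul _)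
    exact h0.congr (Filter.Eventually.of_forall fun ω => (hΦ' ω i).symm)
  have hΦmean : ∀ i, (∫ ω, Φ ω i) = w i := by
    intro i
    have h1 : (∫ ω, Φ ω i) = ∫ ω, (u i + a i * M ω i) := by
      congr 1; funext ω; exact hΦ' ω i
    rw [h1, integral_add (integrable_const _) ((hint i).const_mul _),
      integral_const_mul, hmean i, integral_const]
    simp [ha]
    field_simp
    ring
  have hΦ2int : ∀ i, Integrable (fun ω => (Φ ω i) ^ 2) := by
    intro i
    have h0 : Integrable (fun ω => (u i) ^ 2 + (2 * u i * a i * M ω i + a i ^ 2 * (M ω i) ^ 2)) :=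
      (integrable_const _).add (((hint i).const_mul _).add ((hint2 i).const_mul _))
    exact h0.congr (Filter.Eventually.of_forall fun ω => by dsimp only; rw [hΦ' ω i]; ring)
  have hΦ2mean : ∀ i, (∫ ω, (Φ ω i) ^ 2) = w i ^ 2 + σ ^ 2 / μ ^ 2 * (w i - u i) ^ 2 := by
    intro i
    have h1 : (∫ ω, (Φ ω i) ^ 2)
        = ∫ ω, ((u i) ^ 2 + (2 * u i * a i * M ω i + a i ^ 2 * (M ω i) ^ 2)) := by
      congr 1; funext ω; rw [hΦ' ω i]; ring
    have hg1 : Integrable (fun ω => 2 * u i * a i * M ω i) := (hint i).const_mul _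
    have hg2 : Integrable (fun ω => a i ^ 2 * (M ω i) ^ 2) := (hint2 i).const_mul _
    have hg3 : Integrable (fun ω => 2 * u i * a i * M ω i + a i ^ 2 * (M ω i) ^ 2) := hg1.add hg2
    rw [h1, integral_add (integrable_const _) hg3,
      integral_add hg1 hg2,
      integral_const_mul, integral_const_mul, hmean i, hM2 i, integral_const]
    simp [ha]
    field_simp
    ring
  -- main computation
  have hLΦint1 : Integrable (fun ω => ∑ i, (Φ ω i) ^ 2) :=
    integrable_finset_sum _ (fun i _ => hΦ2int i)
  have hLΦint2 : Integrable (fun ω => ∑ i, (∑ j, b j * A j i) * Φ ω i) :=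
    integrable_finset_sum _ (fun i _ => (hΦint i).const_mul _)
  have hJ1 : Integrable (fun ω => c / 2 * ∑ i, (Φ ω i) ^ 2) := hLΦint1.const_mul _
  have hJ2 : Integrable
      (fun ω => c / 2 * ∑ i, (Φ ω i) ^ 2 - ∑ i, (∑ j, b j * A j i) * Φ ω i) :=
    hJ1.sub hLΦint2
  have hform : (∫ ω, L (Φ ω))
      = ∫ ω, (c / 2 * ∑ i, (Φ ω i) ^ 2 - ∑ i, (∑ j, b j * A j i) * Φ ω i
          + 1 / 2 * ∑ j, b j ^ 2) := by
    congr 1; funext ω; exact hquad (Φ ω)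
  rw [hform, integral_add hJ2 (integrable_const _), integral_sub hJ1 hLΦint2,
    integral_const_mul, integral_finset_sum _ (fun i _ => hΦ2int i),
    integral_finset_sum _ (fun i _ => (hΦint i).const_mul _), integral_const]
  simp_rw [integral_const_mul, hΦmean, hΦ2mean]
  rw [hquad w, Finset.sum_add_distrib]
  have hvol : (volume : Measure Ω).real Set.univ = 1 := by simp
  rw [hvol, Finset.mul_sum, ← Finset.mul_sum]
  field_simp
  ring
end

section
/- Let L(θ) = (1/2)‖Aθ − b‖₂² and let M be a random diagonal matrix with independent entries, E[Mᵢ] = μ > 0, Var(Mᵢ) = σ². With Φ(w;u,M) = μ⁻¹(Mw + (I−M)u − (1−μ)u), the variance decomposition E[L(Φ(w;u,M))] − L(w) = (1/2)·E[‖A(Φ(w;u,M) − w)‖₂²] holds, and E[‖A(Φ(w;u,M) − w)‖₂²] = (σ²/μ²) Σᵢ ‖aᵢ‖² (wᵢ − uᵢ)² where aᵢ are columns of A. -/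
open MeasureTheory ProbabilityTheory Finset

/-- bias–variance decomposition for the quadratic loss under mixout. Since
`Φ(w;u,M)` is unbiased, the excess expected loss equals half the variance of `AΦ`:
`E[L(Φ)] − L(w) = (1/2)E[‖A(Φ − w)‖²]`, and
`E[‖A(Φ − w)‖²] = (σ²/μ²) Σᵢ ‖aᵢ‖²(wᵢ − uᵢ)²` where `aᵢ` are the columns of `A`. -/
theorem mixout_bias_variance_decomposition
    {Ω : Type*} [MeasureSpace Ω] [IsProbabilityMeasure (volume : Measure Ω)]
    {n d : ℕ} (A : Matrix (Fin n) (Fin d) ℝ) (b : Fin n → ℝ)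
    (L : (Fin d → ℝ) → ℝ)
    (hL : ∀ θ, L θ = (1 / 2) * ∑ j, ((∑ i, A j i * θ i) - b j) ^ 2)
    (M : Ω → Fin d → ℝ) (w u : Fin d → ℝ) (μ σ : ℝ) (hμ : 0 < μ)
    (hMmeas : ∀ i, Measurable fun ω => M ω i)
    (hindep : iIndepFun (m := fun _ => Real.measurableSpace) (fun i ω => M ω i) volume)
    (hint : ∀ i, Integrable (fun ω => M ω i))
    (hint2 : ∀ i, Integrable (fun ω => (M ω i) ^ 2))
    (hmean : ∀ i, ∫ ω, M ω i = μ)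
    (hvar : ∀ i, ∫ ω, (M ω i - μ) ^ 2 = σ ^ 2)
    (Φ : Ω → Fin d → ℝ)
    (hΦ : ∀ ω i, Φ ω i = μ⁻¹ * (M ω i * w i + (1 - M ω i) * u i - (1 - μ) * u i)) :
    (∫ ω, L (Φ ω)) - L w =
        (1 / 2) * ∫ ω, ∑ j, (∑ i, A j i * (Φ ω i - w i)) ^ 2 ∧
      (∫ ω, ∑ j, (∑ i, A j i * (Φ ω i - w i)) ^ 2) =
        σ ^ 2 / μ ^ 2 * ∑ i, (∑ j, (A j i) ^ 2) * (w i - u i) ^ 2 := by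
  have hμ' : μ ≠ 0 := ne_of_gt hμ
  set X : Fin d → Ω → ℝ := fun i ω => μ⁻¹ * (M ω i - μ) * (w i - u i) with hXdef
  have hΦw : ∀ ω i, Φ ω i - w i = X i ω := by
    intro ω i
    rw [hΦ, hXdef]
    field_simp
    ring
  have hXmeas : ∀ i, Measurable (X i) := fun i =>
    (((hMmeas i).sub_const μ).const_mul μ⁻¹).mul_const _
  have hXint : ∀ i, Integrable (X i) := fun i =>
    ((((hint i).sub (integrable_const μ)).const_mul μ⁻¹).mul_const _)
  have hXzero : ∀ i, ∫ ω, X i ω = 0 := by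
    intro i
    have : ∫ ω, X i ω = μ⁻¹ * ((∫ ω, M ω i) - μ) * (w i - u i) := by
      rw [hXdef]
      rw [integral_mul_const, integral_const_mul,
        integral_sub (hint i) (integrable_const μ), integral_const, probReal_univ, smul_eq_mul, one_mul]
    rw [this, hmean]; ring
  have hMsqint : ∀ i, Integrable (fun ω => (M ω i - μ) ^ 2) := by
    intro i
    have : (fun ω => (M ω i - μ) ^ 2)
        = fun ω => (M ω i) ^ 2 - (2 * μ) * M ω i + μ ^ 2 := by
      funext ω; ring
    rw [this]
    exact ((hint2 i).sub ((hint i).const_mul _)).add (integrable_const _)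
  have hXsqint : ∀ i, Integrable (fun ω => X i ω * X i ω) := by
    intro i
    have : (fun ω => X i ω * X i ω)
        = fun ω => (μ⁻¹ * (w i - u i)) ^ 2 * (M ω i - μ) ^ 2 := by
      funext ω; simp only [hXdef]; ring
    rw [this]
    exact (hMsqint i).const_mul _
  have hXsq : ∀ i, ∫ ω, X i ω * X i ω = σ ^ 2 / μ ^ 2 * (w i - u i) ^ 2 := by
    intro i
    have h1 : (fun ω => X i ω * X i ω)
        = fun ω => (μ⁻¹ * (w i - u i)) ^ 2 * (M ω i - μ) ^ 2 := by
      funext ω; simp only [hXdef]; ring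
    rw [h1, integral_const_mul, hvar i]
    field_simp
  have hXindep : ∀ i k, i ≠ k → IndepFun (X i) (X k) volume := by
    intro i k hik
    have h := hindep.indepFun hik
    have hφ : ∀ m : Fin d, Measurable (fun x : ℝ => μ⁻¹ * (x - μ) * (w m - u m)) :=
      fun m => ((measurable_id.sub_const μ).const_mul μ⁻¹).mul_const _
    exact h.comp (hφ i) (hφ k)
  have hXmulint : ∀ i k, Integrable (fun ω => X i ω * X k ω) := by
    intro i k
    rcases eq_or_ne i k with rfl | hik
    · exact hXsqint i
    · exact (hXindep i k hik).integrable_mul (hXint i) (hXint k)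
  have hXmul : ∀ i k, i ≠ k → ∫ ω, X i ω * X k ω = 0 := by
    intro i k hik
    have h := (hXindep i k hik).integral_mul_eq_mul_integral (hXint i).aestronglyMeasurable (hXint k).aestronglyMeasurable
    have h2 : (∫ ω, X i ω * X k ω) = integral volume (X i * X k) := rfl
    rw [h2, h, hXzero i, zero_mul]
  -- value of the variance integral
  have hV : (∫ ω, ∑ j, (∑ i, A j i * (Φ ω i - w i)) ^ 2) =
      σ ^ 2 / μ ^ 2 * ∑ i, (∑ j, (A j i) ^ 2) * (w i - u i) ^ 2 := by
    have hpt : ∀ ω, (∑ j, (∑ i, A j i * (Φ ω i - w i)) ^ 2)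
        = ∑ j, ∑ i, ∑ k, (A j i * A j k) * (X i ω * X k ω) := by
      intro ω
      refine Finset.sum_congr rfl fun j _ => ?_
      simp only [hΦw]
      rw [sq, Finset.sum_mul_sum]
      refine Finset.sum_congr rfl fun i _ => Finset.sum_congr rfl fun k _ => ?_
      ring
    simp only [hpt]
    rw [integral_finset_sum _ fun j _ => integrable_finset_sum _ fun i _ =>
      integrable_finset_sum _ fun k _ => (hXmulint i k).const_mul _]
    have hjj : ∀ j : Fin n, (∫ ω, ∑ i, ∑ k, (A j i * A j k) * (X i ω * X k ω))
        = ∑ i, (A j i) ^ 2 * (σ ^ 2 / μ ^ 2 * (w i - u i) ^ 2) := by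
      intro j
      rw [integral_finset_sum _ fun i _ =>
        integrable_finset_sum _ fun k _ => (hXmulint i k).const_mul _]
      refine Finset.sum_congr rfl fun i _ => ?_
      rw [integral_finset_sum _ fun k _ => (hXmulint i k).const_mul _]
      rw [Finset.sum_eq_single i]
      · rw [integral_const_mul, hXsq i]; ring
      · intro k _ hki
        rw [integral_const_mul, hXmul i k (Ne.symm hki), mul_zero]
      · intro h; exact absurd (Finset.mem_univ i) h
    simp only [hjj]
    rw [Finset.sum_comm, Finset.mul_sum]
    refine Finset.sum_congr rfl fun i _ => ?_
    rw [← Finset.sum_mul]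
    ring
  refine ⟨?_, hV⟩
  -- first part
  set c : Fin n → ℝ := fun j => (∑ i, A j i * w i) - b j with hc
  have hS : ∀ ω, L (Φ ω) = (1/2) * ∑ j,
      ((∑ i, A j i * X i ω) ^ 2 + 2 * c j * (∑ i, A j i * X i ω) + c j ^ 2) := by
    intro ω
    rw [hL]
    congr 1
    refine Finset.sum_congr rfl fun j _ => ?_
    have : (∑ i, A j i * Φ ω i) = (∑ i, A j i * X i ω) + ∑ i, A j i * w i := by
      rw [← Finset.sum_add_distrib]
      refine Finset.sum_congr rfl fun i _ => ?_
      rw [← hΦw ω i]; ring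
    rw [this, hc]; ring
  have hSsqint : ∀ j : Fin n, Integrable (fun ω => (∑ i, A j i * X i ω) ^ 2) := by
    intro j
    have : (fun ω => (∑ i, A j i * X i ω) ^ 2)
        = fun ω => ∑ i, ∑ k, (A j i * A j k) * (X i ω * X k ω) := by
      funext ω
      rw [sq, Finset.sum_mul_sum]
      refine Finset.sum_congr rfl fun i _ => Finset.sum_congr rfl fun k _ => ?_
      ring
    rw [this]
    exact integrable_finset_sum _ fun i _ =>
      integrable_finset_sum _ fun k _ => (hXmulint i k).const_mul _
  have hSint : ∀ j : Fin n, Integrable (fun ω => ∑ i, A j i * X i ω) :=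
    fun j => integrable_finset_sum _ fun i _ => (hXint i).const_mul _
  have hterm : ∀ j : Fin n, (∫ ω, ((∑ i, A j i * X i ω) ^ 2
      + 2 * c j * (∑ i, A j i * X i ω) + c j ^ 2))
      = (∫ ω, (∑ i, A j i * X i ω) ^ 2) + c j ^ 2 := by
    intro j
    have h1 : Integrable (fun ω => (∑ i, A j i * X i ω) ^ 2
        + 2 * c j * (∑ i, A j i * X i ω)) := (hSsqint j).add ((hSint j).const_mul _)
    rw [integral_add h1 (integrable_const _),
      integral_add (hSsqint j) ((hSint j).const_mul _),
      integral_const_mul, integral_const, probReal_univ, smul_eq_mul, one_mul]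
    have : ∫ ω, ∑ i, A j i * X i ω = 0 := by
      rw [integral_finset_sum _ fun i _ => (hXint i).const_mul _]
      simp only [integral_const_mul, hXzero, mul_zero, Finset.sum_const_zero]
    rw [this]; ring
  have hLint : (∫ ω, L (Φ ω)) = (1/2) * ∑ j, ((∫ ω, (∑ i, A j i * X i ω) ^ 2) + c j ^ 2) := by
    simp only [hS]
    have hIj : ∀ j : Fin n, Integrable (fun ω => (∑ i, A j i * X i ω) ^ 2
        + 2 * c j * (∑ i, A j i * X i ω) + c j ^ 2) :=
      fun j => ((hSsqint j).add ((hSint j).const_mul _)).add (integrable_const _)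
    rw [integral_const_mul, integral_finset_sum _ fun j _ => hIj j]
    congr 1
    exact Finset.sum_congr rfl fun j _ => hterm j
  have hVrw : (∫ ω, ∑ j, (∑ i, A j i * (Φ ω i - w i)) ^ 2)
      = ∑ j, ∫ ω, (∑ i, A j i * X i ω) ^ 2 := by
    have : ∀ ω, (∑ j, (∑ i, A j i * (Φ ω i - w i)) ^ 2)
        = ∑ j, (∑ i, A j i * X i ω) ^ 2 := by
      intro ω; simp only [hΦw]
    simp only [this]
    exact integral_finset_sum _ fun j _ => hSsqint j
  rw [hLint, hVrw, hL w, hc]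
  rw [Finset.sum_add_distrib]
  ring
end
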